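/- arXiv:1806.11559 — 3 statements merged into one kernel-verified Lean document; each statement's English description precedes it below -/
import Mathlib

section
/- Bounded-prefix determination of outcomes: Let M be an RB-CGS#, A a nonempty coalition, b a resource bound, and k = min_{a∈A} b_{a,1}. If two strategies F_A and F'_A agree on every nonempty state sequence of length at most k, then for every state s, out(s, F_A, b) = out(s, F'_A, b). -/
/-- A resource-bounded concurrent game structure with a diminishing resource (RB-CGS#). -/
structure RBCGS (Agt S Act Res : Type) where
  /-- available actions for each agent in each state -/
  d : S → Agt → Set Act
  d_ne : ∀ s a, (d s a).Nonempty
  /-- cost function (negative = consumption, positive = production) -/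
  cost : S → Act → Res → ℤ
  /-- the distinguished diminishing resource (the "first" resource) -/
  res1 : Res
  /-- every available action consumes at least one unit of the diminishing resource -/
  cost_first : ∀ s (a : Agt) (α : Act), α ∈ d s a → cost s α res1 ≤ -1
  /-- partial transition function on joint actions -/
  tr : S → (Agt → Act) → Option S

namespace RBCGS

variable {Agt S Act Res : Type}

/-- consumption of resource ρ by action α at state s : `|min(0, c(s,α))|`. -/
def consR (M : RBCGS Agt S Act Res) (s : S) (α : Act) (ρ : Res) : ℕ :=
  (min 0 (M.cost s α ρ)).natAbs

/-- production of resource ρ by action α at state s : `max(0, c(s,α))`. -/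
def prodR (M : RBCGS Agt S Act Res) (s : S) (α : Act) (ρ : Res) : ℕ :=
  (max 0 (M.cost s α ρ)).toNat

/-- σ is a (projection of a) joint action for coalition A at state s. -/
def JointAt (M : RBCGS Agt S Act Res) (A : Set Agt) (s : S) (σ : Agt → Act) : Prop :=
  ∀ a ∈ A, σ a ∈ M.d s a

/-- outcomes of a joint action of coalition A at state s. -/
def outA (M : RBCGS Agt S Act Res) (A : Set Agt) (s : S) (σA : Agt → Act) : Set S :=
  { s' | ∃ σ : Agt → Act, (∀ a, σ a ∈ M.d s a) ∧ (∀ a ∈ A, σ a = σA a) ∧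
    M.tr s σ = some s' }

variable [Inhabited S]

/-- F is a strategy for coalition A : on every nonempty history it prescribes a joint
action available to A at the last state of the history. -/
def Strategy (M : RBCGS Agt S Act Res) (A : Set Agt) (F : List S → Agt → Act) : Prop :=
  ∀ l : List S, l ≠ [] → M.JointAt A (l.getD (l.length - 1) default) (F l)

/-- l is a (finite, nonempty) computation starting at s consistent with strategy F
(the computation `λ[1..k]` is represented 0-based as `l[0..k-1]`). -/
def ConsistentFrom (M : RBCGS Agt S Act Res) (A : Set Agt) (F : List S → Agt → Act)
    (s : S) (l : List S) : Prop :=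
  l ≠ [] ∧ l.getD 0 default = s ∧
    ∀ i, i + 1 < l.length →
      l.getD (i + 1) default ∈ M.outA A (l.getD i default) (F (l.take (i + 1)))

/-- `eAvail M F b l i a ρ` is the amount `e_a(λ[i+1])` of resource ρ available to a
after i steps of l under strategy F with initial bound b. -/
def eAvail (M : RBCGS Agt S Act Res) (F : List S → Agt → Act)
    (b : Agt → Res → ℕ) (l : List S) : ℕ → Agt → Res → ℤ
  | 0 => fun a ρ => (b a ρ : ℤ)
  | i + 1 => fun a ρ =>
      eAvail M F b l i a ρ
        - (M.consR (l.getD i default) (F (l.take (i + 1)) a) ρ : ℤ)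
        + (M.prodR (l.getD i default) (F (l.take (i + 1)) a) ρ : ℤ)

/-- l is b-consistent with strategy F for coalition A. -/
def BConsistent (M : RBCGS Agt S Act Res) (A : Set Agt) (F : List S → Agt → Act)
    (b : Agt → Res → ℕ) (l : List S) : Prop :=
  ∀ a ∈ A, ∀ i, i + 1 < l.length → ∀ ρ,
    (M.consR (l.getD i default) (F (l.take (i + 1)) a) ρ : ℤ) ≤ M.eAvail F b l i a ρ

/-- l is a b-maximal computation from s consistent with F. -/
def BMaximal (M : RBCGS Agt S Act Res) (A : Set Agt) (F : List S → Agt → Act)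
    (b : Agt → Res → ℕ) (s : S) (l : List S) : Prop :=
  M.ConsistentFrom A F s l ∧ M.BConsistent A F b l ∧
    ¬ ∃ l' : List S, l <+: l' ∧ l.length < l'.length ∧
        M.ConsistentFrom A F s l' ∧ M.BConsistent A F b l'

/-- `out(s, F_A, b)` : the set of b-maximal computations from s consistent with F. -/
def outSet (M : RBCGS Agt S Act Res) (A : Set Agt) (F : List S → Agt → Act)
    (b : Agt → Res → ℕ) (s : S) : Set (List S) :=
  { l | M.BMaximal A F b s l }

end RBCGS


section Aux
variable {Agt S Act Res : Type} [Inhabited S]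

open RBCGS

lemma take_getD_last (l : List S) (i : ℕ) (h : i < l.length) :
    (l.take (i+1)).getD i default = l.getD i default := by
  simp [List.getD_eq_getElem?_getD, List.getElem?_take, Nat.lt_succ_self]

lemma action_mem (M : RBCGS Agt S Act Res) {A : Set Agt} {F : List S → Agt → Act}
    (hF : M.Strategy A F) {l : List S} {i : ℕ} (hi : i < l.length)
    {a : Agt} (ha : a ∈ A) : F (l.take (i+1)) a ∈ M.d (l.getD i default) a := by
  have hne : l.take (i+1) ≠ [] := by
    simp [← List.length_pos_iff, List.length_take]; omega
  have := hF (l.take (i+1)) hne a ha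
  have hlen : (l.take (i+1)).length = i + 1 := by simp [List.length_take]; omega
  rwa [hlen, Nat.add_sub_cancel, take_getD_last l i hi] at this

lemma consR_ge_one (M : RBCGS Agt S Act Res) {s : S} {a : Agt} {α : Act}
    (h : α ∈ M.d s a) : 1 ≤ M.consR s α M.res1 := by
  have := M.cost_first s a α h
  unfold RBCGS.consR
  omega

lemma prodR_eq_zero (M : RBCGS Agt S Act Res) {s : S} {a : Agt} {α : Act}
    (h : α ∈ M.d s a) : M.prodR s α M.res1 = 0 := by
  have := M.cost_first s a α h
  unfold RBCGS.prodR
  omega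

lemma eAvail_le (M : RBCGS Agt S Act Res) {A : Set Agt} {F : List S → Agt → Act}
    (hF : M.Strategy A F) (b : Agt → Res → ℕ) (l : List S) {a : Agt} (ha : a ∈ A) :
    ∀ i, i < l.length → M.eAvail F b l i a M.res1 ≤ (b a M.res1 : ℤ) - i := by
  intro i
  induction i with
  | zero => intro _; simp [RBCGS.eAvail]
  | succ i ih =>
    intro hi
    have hi' : i < l.length := by omega
    have hmem := action_mem M hF hi' ha
    have h1 := consR_ge_one M hmem
    have h2 := prodR_eq_zero M hmem
    have := ih hi'
    simp only [RBCGS.eAvail, h2]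
    push_cast
    omega

lemma length_bound (M : RBCGS Agt S Act Res) {A : Set Agt} {F : List S → Agt → Act}
    (hF : M.Strategy A F) {b : Agt → Res → ℕ} {l : List S}
    (hBC : M.BConsistent A F b l) {a : Agt} (ha : a ∈ A) :
    l.length - 1 ≤ b a M.res1 := by
  rcases Nat.lt_or_ge l.length 2 with h | h
  · omega
  · set i := l.length - 2 with hidef
    have hi : i + 1 < l.length := by omega
    have hi' : i < l.length := by omega
    have hc := hBC a ha i hi M.res1
    have h1 := consR_ge_one M (action_mem M hF hi' ha)
    have h2 := eAvail_le M hF b l ha i hi'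
    have : (1 : ℤ) ≤ (b a M.res1 : ℤ) - i := by
      calc (1:ℤ) ≤ (M.consR (l.getD i default) (F (l.take (i+1)) a) M.res1 : ℤ) := by
              exact_mod_cast h1
        _ ≤ _ := le_trans hc h2
    omega

lemma length_le_sInf (M : RBCGS Agt S Act Res) {A : Set Agt} (hA : A.Nonempty)
    {F : List S → Agt → Act} (hF : M.Strategy A F) {b : Agt → Res → ℕ} {l : List S}
    (hBC : M.BConsistent A F b l) :
    l.length - 1 ≤ sInf ((fun a => b a M.res1) '' A) := by
  apply le_csInf (hA.image _)
  rintro x ⟨a, ha, rfl⟩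
  exact length_bound M hF hBC ha

lemma takes_eq (M : RBCGS Agt S Act Res) {A : Set Agt} (hA : A.Nonempty)
    {F F' : List S → Agt → Act} (hF : M.Strategy A F) {b : Agt → Res → ℕ}
    (hagree : ∀ l : List S, l ≠ [] →
      l.length ≤ sInf ((fun a => b a M.res1) '' A) → F l = F' l)
    {l : List S} (hBC : M.BConsistent A F b l) {i : ℕ} (hi : i + 1 < l.length) :
    F (l.take (i+1)) = F' (l.take (i+1)) := by
  have hk := length_le_sInf M hA hF hBC
  apply hagree
  · simp [← List.length_pos_iff, List.length_take]; omega
  · simp [List.length_take]; omega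

lemma eAvail_congr (M : RBCGS Agt S Act Res) {F F' : List S → Agt → Act}
    (b : Agt → Res → ℕ) (l : List S) {i : ℕ}
    (h : ∀ j, j + 1 ≤ i → F (l.take (j+1)) = F' (l.take (j+1))) :
    M.eAvail F b l i = M.eAvail F' b l i := by
  induction i with
  | zero => rfl
  | succ i ih =>
    have hih := ih (fun j hj => h j (by omega))
    funext a ρ
    simp only [RBCGS.eAvail, hih, h i (le_refl _)]

lemma transfer (M : RBCGS Agt S Act Res) {A : Set Agt} (hA : A.Nonempty)
    {F F' : List S → Agt → Act} (hF : M.Strategy A F) {b : Agt → Res → ℕ}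
    (hagree : ∀ l : List S, l ≠ [] →
      l.length ≤ sInf ((fun a => b a M.res1) '' A) → F l = F' l)
    {s : S} {l : List S} (hCF : M.ConsistentFrom A F s l)
    (hBC : M.BConsistent A F b l) :
    M.ConsistentFrom A F' s l ∧ M.BConsistent A F' b l := by
  obtain ⟨hne, hfst, hstep⟩ := hCF
  constructor
  · refine ⟨hne, hfst, fun i hi => ?_⟩
    rw [← takes_eq M hA hF hagree hBC hi]
    exact hstep i hi
  · intro a ha i hi ρ
    rw [← takes_eq M hA hF hagree hBC hi,
      ← eAvail_congr M b l (fun j hj => takes_eq M hA hF hagree hBC (by omega))]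
    exact hBC a ha i hi ρ

lemma bmax_transfer (M : RBCGS Agt S Act Res) {A : Set Agt} (hA : A.Nonempty)
    {F F' : List S → Agt → Act} (hF : M.Strategy A F) (hF' : M.Strategy A F')
    {b : Agt → Res → ℕ}
    (hagree : ∀ l : List S, l ≠ [] →
      l.length ≤ sInf ((fun a => b a M.res1) '' A) → F l = F' l)
    {s : S} {l : List S} (h : M.BMaximal A F b s l) : M.BMaximal A F' b s l := by
  obtain ⟨hCF, hBC, hmax⟩ := h
  obtain ⟨hCF', hBC'⟩ := transfer M hA hF hagree hCF hBC
  refine ⟨hCF', hBC', ?_⟩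
  rintro ⟨l', hpre, hlen, hCF2, hBC2⟩
  have hagree' : ∀ l : List S, l ≠ [] →
      l.length ≤ sInf ((fun a => b a M.res1) '' A) → F' l = F l :=
    fun l h1 h2 => (hagree l h1 h2).symm
  obtain ⟨hCF3, hBC3⟩ := transfer M hA hF' hagree' hCF2 hBC2
  exact hmax ⟨l', hpre, hlen, hCF3, hBC3⟩

end Aux


/-- Bounded-prefix determination of outcomes: if two strategies agree on all
nonempty state sequences of length at most `k = min_{a∈A} b_{a,1}`, they have the same
sets of b-maximal outcomes from every state. -/
theorem outSet_determined_by_bounded_prefix {Agt S Act Res : Type} [Inhabited S]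
    (M : RBCGS Agt S Act Res) (A : Set Agt) (hA : A.Nonempty)
    (b : Agt → Res → ℕ)
    (F F' : List S → Agt → Act) (hF : M.Strategy A F) (hF' : M.Strategy A F')
    (hagree : ∀ l : List S, l ≠ [] →
      l.length ≤ sInf ((fun a => b a M.res1) '' A) → F l = F' l) :
    ∀ s : S, M.outSet A F b s = M.outSet A F' b s := by
  intro s
  ext l
  constructor
  · exact fun h => bmax_transfer M hA hF hF' hagree h
  · exact fun h => bmax_transfer M hA hF' hF
      (fun l h1 h2 => (hagree l h1 h2).symm) h
end

section
/- Fixed-point characterization of the resource-bounded Release modality (correctness of the release-strategy search): Let M be an RB-CGS#, A a nonempty coalition, b a resource bound, s a state, and φ, ψ formulas of RB±ATL#. Then M, s ⊨ ⟨⟨A^b⟩⟩ φ R ψ if and only if M, s ⊨ ψ and at least one of the following holds: (i) M, s ⊨ φ; (ii) there exists σ_A ∈ D_A(s) such that either cons(s, (σ_A)_a) ≤ b_a fails for some a ∈ A or out(s, σ_A) is empty; (iii) there exists σ_A ∈ D_A(s) with cons(s, (σ_A)_a) ≤ b_a componentwise for every a ∈ A, out(s, σ_A) nonempty, and M, s'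 ⊨ ⟨⟨A^{b'}⟩⟩ φ R ψ for every s' ∈ out(s, σ_A), where b'_a = b_a − cons(s, (σ_A)_a) + prod(s, (σ_A)_a) for each a ∈ A. -/
/-- Formulas of RB±ATL#. -/
inductive RBForm (Agt Res P : Type) : Type 1 where
  | prop : P → RBForm Agt Res P
  | neg : RBForm Agt Res P → RBForm Agt Res P
  | or : RBForm Agt Res P → RBForm Agt Res P → RBForm Agt Res P
  | nxt : Set Agt → (Agt → Res → ℕ) → RBForm Agt Res P → RBForm Agt Res P
  | untl : Set Agt → (Agt → Res → ℕ) → RBForm Agt Res P → RBForm Agt Res P → RBForm Agt Res P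
  | rls : Set Agt → (Agt → Res → ℕ) → RBForm Agt Res P → RBForm Agt Res P → RBForm Agt Res P

namespace RBCGS

variable {Agt S Act Res P : Type} [Inhabited S]

/-- Truth of an RB±ATL# formula at a state of an RB-CGS#, given a valuation V. -/
def Sat (M : RBCGS Agt S Act Res) (V : P → S → Prop) :
    RBForm Agt Res P → S → Prop
  | .prop p, s => V p s
  | .neg φ, s => ¬ Sat M V φ s
  | .or φ ψ, s => Sat M V φ s ∨ Sat M V ψ s
  | .nxt A b φ, s => ∃ F, M.Strategy A F ∧
      ∀ l ∈ M.outSet A F b s, 2 ≤ l.length ∧ Sat M V φ (l.getD 1 default)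
  | .untl A b φ ψ, s => ∃ F, M.Strategy A F ∧
      ∀ l ∈ M.outSet A F b s, ∃ i < l.length,
        Sat M V ψ (l.getD i default) ∧ ∀ j < i, Sat M V φ (l.getD j default)
  | .rls A b φ ψ, s => ∃ F, M.Strategy A F ∧
      ∀ l ∈ M.outSet A F b s,
        (∃ i < l.length, Sat M V φ (l.getD i default) ∧
          ∀ j ≤ i, Sat M V ψ (l.getD j default)) ∨
        (∀ j < l.length, Sat M V ψ (l.getD j default))

end RBCGS

/-- All coalitions occurring in the formula are nonempty. -/
def RBForm.goodCoal {Agt Res P : Type} : RBForm Agt Res P → Prop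
  | .prop _ => True
  | .neg φ => φ.goodCoal
  | .or φ ψ => φ.goodCoal ∧ ψ.goodCoal
  | .nxt A _ φ => A.Nonempty ∧ φ.goodCoal
  | .untl A _ φ ψ => A.Nonempty ∧ φ.goodCoal ∧ ψ.goodCoal
  | .rls A _ φ ψ => A.Nonempty ∧ φ.goodCoal ∧ ψ.goodCoal

namespace RBCGS

variable {Agt S Act Res : Type} [Inhabited S]

lemma getD_append_left {α : Type} [Inhabited α] (l r : List α) {i : ℕ} (h : i < l.length) :
    (l ++ r).getD i default = l.getD i default := by
  simp [List.getD, List.getElem?_append, h]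

lemma getD_take' {α : Type} [Inhabited α] (l : List α) {i n : ℕ} (h : i < n) :
    (l.take n).getD i default = l.getD i default := by
  simp [List.getD, List.getElem?_take, h]

lemma getD_prefix {α : Type} [Inhabited α] {l t : List α} (h : l <+: t) {i : ℕ}
    (hi : i < l.length) : t.getD i default = l.getD i default := by
  obtain ⟨r, rfl⟩ := h; exact getD_append_left l r hi

lemma take_one_ne_nil {α : Type} [Inhabited α] {l : List α} (h : l ≠ []) :
    l.take 1 = [l.getD 0 default] := by
  cases l with
  | nil => exact absurd rfl h
  | cons x t => simp

lemma take_getD_last {α : Type} [Inhabited α] (l : List α) {i : ℕ} (h : i < l.length) :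
    (l.take (i+1)).getD ((l.take (i+1)).length - 1) default = l.getD i default := by
  have hl : (l.take (i+1)).length = i + 1 := by
    simp [List.length_take]; omega
  rw [hl]
  simp only [Nat.add_sub_cancel]
  exact getD_take' l (Nat.lt_succ_self i)

lemma take_ne_nil {α : Type} {l : List α} (h : l ≠ []) (n : ℕ) : l.take (n+1) ≠ [] := by
  cases l with
  | nil => exact absurd rfl h
  | cons x t => simp

lemma one_le_consR (M : RBCGS Agt S Act Res) {s : S} {α : Act} {a : Agt} (h : α ∈ M.d s a) :
    1 ≤ M.consR s α M.res1 := by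
  have h1 := M.cost_first s a α h
  unfold consR
  rw [min_eq_right (by omega : M.cost s α M.res1 ≤ 0)]
  omega

lemma prodR_res1 (M : RBCGS Agt S Act Res) {s : S} {α : Act} {a : Agt} (h : α ∈ M.d s a) :
    M.prodR s α M.res1 = 0 := by
  have h1 := M.cost_first s a α h
  unfold prodR
  rw [max_eq_left (by omega : M.cost s α M.res1 ≤ 0)]
  rfl

/-- the shifted strategy -/
def shiftS (F : List S → Agt → Act) (s : S) : List S → Agt → Act := fun l => F (s :: l)

/-- a default strategy made by choice -/
noncomputable def choiceStrat (M : RBCGS Agt S Act Res) : List S → Agt → Act :=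
  fun l a => (M.d_ne (l.getD (l.length - 1) default) a).some

lemma choiceStrat_strategy (M : RBCGS Agt S Act Res) (A : Set Agt) :
    M.Strategy A M.choiceStrat := fun _ _ a _ => (M.d_ne _ a).some_mem

lemma shiftS_strategy (M : RBCGS Agt S Act Res) {A : Set Agt} {F : List S → Agt → Act}
    (hF : M.Strategy A F) (s : S) : M.Strategy A (shiftS F s) := by
  intro l hl a ha
  have h1 := hF (s :: l) (by simp) a ha
  have hlen : (s :: l).length - 1 = (l.length - 1) + 1 := by
    have := List.length_pos_iff.mpr hl
    simp; omega
  rwa [hlen, List.getD_cons_succ] at h1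

/-- the resource bound is sufficient for the first step -/
def BOK (M : RBCGS Agt S Act Res) (A : Set Agt) (F : List S → Agt → Act)
    (b : Agt → Res → ℕ) (s : S) : Prop :=
  ∀ a ∈ A, ∀ ρ, M.consR s (F [s] a) ρ ≤ b a ρ

/-- the bound after the first step -/
def bnext (M : RBCGS Agt S Act Res) (F : List S → Agt → Act)
    (b : Agt → Res → ℕ) (s : S) : Agt → Res → ℕ :=
  fun a ρ => b a ρ - M.consR s (F [s] a) ρ + M.prodR s (F [s] a) ρ

lemma eAvail_succ (M : RBCGS Agt S Act Res) (F : List S → Agt → Act)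
    (b : Agt → Res → ℕ) (l : List S) (i : ℕ) (a : Agt) (ρ : Res) :
    M.eAvail F b l (i+1) a ρ = M.eAvail F b l i a ρ
      - (M.consR (l.getD i default) (F (l.take (i + 1)) a) ρ : ℤ)
      + (M.prodR (l.getD i default) (F (l.take (i + 1)) a) ρ : ℤ) := rfl

lemma eAvail_shift (M : RBCGS Agt S Act Res) {A : Set Agt} {F : List S → Agt → Act}
    {b : Agt → Res → ℕ} {s : S} (hb : M.BOK A F b s) (l' : List S) {a : Agt}
    (ha : a ∈ A) (ρ : Res) :
    ∀ i, M.eAvail F b (s :: l') (i+1) a ρ = M.eAvail (shiftS F s) (M.bnext F b s) l' i a ρ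
  | 0 => by
      have h1 := hb a ha ρ
      rw [eAvail_succ]
      simp only [eAvail, bnext, List.getD_cons_zero, List.take_succ_cons, List.take_zero]
      omega
  | (i+1) => by
      rw [eAvail_succ M F b (s :: l') (i+1), eAvail_succ M (shiftS F s) (M.bnext F b s) l' i,
        eAvail_shift M hb l' ha ρ i, List.getD_cons_succ, List.take_succ_cons]
      rfl

lemma consistentFrom_cons (M : RBCGS Agt S Act Res) (A : Set Agt) (F : List S → Agt → Act)
    (s : S) {l' : List S} (h : l' ≠ []) :
    M.ConsistentFrom A F s (s :: l') ↔
      l'.getD 0 default ∈ M.outA A s (F [s]) ∧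
        M.ConsistentFrom A (shiftS F s) (l'.getD 0 default) l' := by
  constructor
  · rintro ⟨-, -, hstep⟩
    have h1 := hstep 0 (by simp; exact List.length_pos_iff.mpr h)
    simp only [List.getD_cons_succ, List.getD_cons_zero, List.take_succ_cons,
      List.take_zero] at h1
    refine ⟨h1, h, rfl, fun i hi => ?_⟩
    have h2 := hstep (i+1) (by simp at hi ⊢; omega)
    simpa only [List.getD_cons_succ, List.take_succ_cons, shiftS] using h2
  · rintro ⟨hout, -, -, hstep⟩
    refine ⟨by simp, by simp, fun i hi => ?_⟩
    cases i with
    | zero =>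
        simpa only [List.getD_cons_succ, List.getD_cons_zero, List.take_succ_cons,
          List.take_zero] using hout
    | succ j =>
        have h2 := hstep j (by simp at hi; omega)
        simpa only [List.getD_cons_succ, List.take_succ_cons, shiftS] using h2

lemma bConsistent_cons (M : RBCGS Agt S Act Res) (A : Set Agt) (F : List S → Agt → Act)
    (b : Agt → Res → ℕ) (s : S) {l' : List S} (h : l' ≠ []) :
    M.BConsistent A F b (s :: l') ↔
      M.BOK A F b s ∧ M.BConsistent A (shiftS F s) (M.bnext F b s) l' := by
  constructor
  · intro hbc
    have hbok : M.BOK A F b s := by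
      intro a ha ρ
      have h1 := hbc a ha 0 (by simp; exact List.length_pos_iff.mpr h) ρ
      simp only [List.getD_cons_zero, List.take_succ_cons, List.take_zero, eAvail] at h1
      exact_mod_cast h1
    refine ⟨hbok, fun a ha i hi ρ => ?_⟩
    have h1 := hbc a ha (i+1) (by simp at hi ⊢; omega) ρ
    rw [eAvail_shift M hbok l' ha ρ i] at h1
    simpa only [List.getD_cons_succ, List.take_succ_cons, shiftS] using h1
  · rintro ⟨hbok, hbc⟩ a ha i hi ρ
    cases i with
    | zero =>
        simp only [List.getD_cons_zero, List.take_succ_cons, List.take_zero, eAvail]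
        exact_mod_cast hbok a ha ρ
    | succ j =>
        have h1 := hbc a ha j (by simp at hi; omega) ρ
        rw [← eAvail_shift M hbok l' ha ρ j] at h1
        simpa only [List.getD_cons_succ, List.take_succ_cons, shiftS] using h1

lemma bmaximal_cons (M : RBCGS Agt S Act Res) (A : Set Agt) (F : List S → Agt → Act)
    (b : Agt → Res → ℕ) (s : S) {l' : List S} (h : l' ≠ []) (hb : M.BOK A F b s) :
    M.BMaximal A F b s (s :: l') ↔
      l'.getD 0 default ∈ M.outA A s (F [s]) ∧
        M.BMaximal A (shiftS F s) (M.bnext F b s) (l'.getD 0 default) l' := by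
  constructor
  · rintro ⟨hc, hbc, hmax⟩
    obtain ⟨hout, hc'⟩ := (consistentFrom_cons M A F s h).mp hc
    refine ⟨hout, hc', ((bConsistent_cons M A F b s h).mp hbc).2, ?_⟩
    rintro ⟨t, hpre, hlt, htc, htbc⟩
    have htne : t ≠ [] := by
      intro h'; subst h'; simp at hlt
    have ht0 : t.getD 0 default = l'.getD 0 default := getD_prefix hpre (List.length_pos_iff.mpr h)
    refine hmax ⟨s :: t, ?_, by simp; omega, ?_, ?_⟩
    · obtain ⟨r, rfl⟩ := hpre; exact ⟨r, rfl⟩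
    · exact (consistentFrom_cons M A F s htne).mpr ⟨ht0 ▸ hout, ht0 ▸ htc⟩
    · exact (bConsistent_cons M A F b s htne).mpr ⟨hb, htbc⟩
  · rintro ⟨hout, hc', hbc', hmax'⟩
    refine ⟨(consistentFrom_cons M A F s h).mpr ⟨hout, hc'⟩,
      (bConsistent_cons M A F b s h).mpr ⟨hb, hbc'⟩, ?_⟩
    rintro ⟨t, hpre, hlt, htc, htbc⟩
    obtain ⟨r, rfl⟩ := hpre
    have hr : r ≠ [] := by
      intro h'; subst h'; simp at hlt
    have hne2 : l' ++ r ≠ [] := by simp [h]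
    rw [show (s :: l') ++ r = s :: (l' ++ r) from rfl] at htc htbc
    obtain ⟨-, htc'⟩ := (consistentFrom_cons M A F s hne2).mp htc
    have htbc' := ((bConsistent_cons M A F b s hne2).mp htbc).2
    rw [getD_append_left l' r (List.length_pos_iff.mpr h)] at htc'
    refine hmax' ⟨l' ++ r, ⟨r, rfl⟩, ?_, htc', htbc'⟩
    have := List.length_pos_iff.mpr hr
    simp; omega

lemma eAvail_congr (M : RBCGS Agt S Act Res) {F₁ F₂ : List S → Agt → Act} {s' : S}
    (h : ∀ m : List S, m ≠ [] → m.getD 0 default = s' → F₁ m = F₂ m)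
    (b' : Agt → Res → ℕ) {l : List S} (hl : l ≠ []) (h0 : l.getD 0 default = s')
    (a : Agt) (ρ : Res) : ∀ i, M.eAvail F₁ b' l i a ρ = M.eAvail F₂ b' l i a ρ := by
  intro i
  induction i with
  | zero => rfl
  | succ j ih =>
      simp only [eAvail, ih]
      rw [h (l.take (j+1)) (take_ne_nil hl j) (by rw [getD_take' l (Nat.succ_pos j), h0])]

lemma consistentFrom_imp (M : RBCGS Agt S Act Res) (A : Set Agt)
    {F₁ F₂ : List S → Agt → Act} {s' : S}
    (h : ∀ m : List S, m ≠ [] → m.getD 0 default = s' → F₁ m = F₂ m)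
    {l : List S} (hc : M.ConsistentFrom A F₁ s' l) : M.ConsistentFrom A F₂ s' l := by
  obtain ⟨hl, h0, hstep⟩ := hc
  refine ⟨hl, h0, fun i hi => ?_⟩
  have := hstep i hi
  rwa [h (l.take (i+1)) (take_ne_nil hl i) (by rw [getD_take' l (Nat.succ_pos i), h0])] at this

lemma bConsistent_imp (M : RBCGS Agt S Act Res) (A : Set Agt)
    {F₁ F₂ : List S → Agt → Act} {s' : S}
    (h : ∀ m : List S, m ≠ [] → m.getD 0 default = s' → F₁ m = F₂ m)
    (b' : Agt → Res → ℕ) {l : List S} (hl : l ≠ []) (h0 : l.getD 0 default = s')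
    (hbc : M.BConsistent A F₁ b' l) : M.BConsistent A F₂ b' l := by
  intro a ha i hi ρ
  have h1 := hbc a ha i hi ρ
  rw [eAvail_congr M h b' hl h0 a ρ i] at h1
  rwa [h (l.take (i+1)) (take_ne_nil hl i) (by rw [getD_take' l (Nat.succ_pos i), h0])] at h1

lemma outSet_subset_congr (M : RBCGS Agt S Act Res) (A : Set Agt)
    {F₁ F₂ : List S → Agt → Act} (b' : Agt → Res → ℕ) (s' : S)
    (h : ∀ m : List S, m ≠ [] → m.getD 0 default = s' → F₁ m = F₂ m) :
    M.outSet A F₁ b' s' ⊆ M.outSet A F₂ b' s' := by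
  rintro l ⟨hc, hbc, hmax⟩
  have hl := hc.1
  have h0 := hc.2.1
  have h' : ∀ m : List S, m ≠ [] → m.getD 0 default = s' → F₂ m = F₁ m :=
    fun m h1 h2 => (h m h1 h2).symm
  refine ⟨consistentFrom_imp M A h hc, bConsistent_imp M A h b' hl h0 hbc, ?_⟩
  rintro ⟨t, hpre, hlt, htc, htbc⟩
  exact hmax ⟨t, hpre, hlt, consistentFrom_imp M A h' htc,
    bConsistent_imp M A h' b' htc.1 htc.2.1 htbc⟩

lemma outSet_congr (M : RBCGS Agt S Act Res) (A : Set Agt)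
    {F₁ F₂ : List S → Agt → Act} (b' : Agt → Res → ℕ) (s' : S)
    (h : ∀ m : List S, m ≠ [] → m.getD 0 default = s' → F₁ m = F₂ m) :
    M.outSet A F₁ b' s' = M.outSet A F₂ b' s' :=
  Set.Subset.antisymm (outSet_subset_congr M A b' s' h)
    (outSet_subset_congr M A b' s' fun m h1 h2 => (h m h1 h2).symm)

lemma exists_bmaximal (M : RBCGS Agt S Act Res) {A : Set Agt} (hA : A.Nonempty)
    {F : List S → Agt → Act} (hF : M.Strategy A F) (b : Agt → Res → ℕ) (s : S) :
    ∃ l, l ∈ M.outSet A F b s := by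
  obtain ⟨a₀, ha₀⟩ := hA
  set N := b a₀ M.res1 with hN
  have key : ∀ l : List S, ∀ i, i < l.length →
      M.eAvail F b l i a₀ M.res1 ≤ (N : ℤ) - i := by
    intro l i
    induction i with
    | zero => intro _; simp [eAvail, hN]
    | succ j ih =>
        intro hj
        have h1 := ih (by omega)
        have hne : l ≠ [] := by
          intro h'; subst h'; simp at hj
        have hav := hF (l.take (j+1)) (take_ne_nil hne j) a₀ ha₀
        rw [take_getD_last l (by omega : j < l.length)] at hav
        have h2 := M.one_le_consR hav
        have h3 := M.prodR_res1 hav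
        simp only [eAvail, h3]
        push_cast
        omega
  have bound : ∀ l : List S, M.ConsistentFrom A F s l → M.BConsistent A F b l →
      l.length ≤ N + 1 := by
    intro l hc hbc
    by_contra hlen
    push_neg at hlen
    have h1 := hbc a₀ ha₀ N (by omega) M.res1
    have h2 := key l N (by omega)
    have hne : l ≠ [] := by
      intro h'; subst h'; simp at hlen
    have hav := hF (l.take (N+1)) (take_ne_nil hne N) a₀ ha₀
    rw [take_getD_last l (by omega : N < l.length)] at hav
    have h3 := M.one_le_consR hav
    omega
  set T : Set ℕ := {n | ∃ l : List S, M.ConsistentFrom A F s l ∧ M.BConsistent A F b l ∧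
    l.length = n} with hT
  have hT1 : 1 ∈ T := by
    refine ⟨[s], ⟨by simp, by simp, fun i hi => absurd hi (by simp)⟩,
      fun a _ i hi _ => absurd hi (by simp), rfl⟩
  have hbdd : BddAbove T := by
    refine ⟨N + 1, fun n hn => ?_⟩
    obtain ⟨l, hc, hbc, hlen⟩ := hn
    exact hlen ▸ bound l hc hbc
  have hmem := Nat.sSup_mem ⟨1, hT1⟩ hbdd
  obtain ⟨l, hc, hbc, hlen⟩ := hmem
  refine ⟨l, hc, hbc, ?_⟩
  rintro ⟨t, hpre, hlt, htc, htbc⟩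
  have := le_csSup hbdd (⟨t, htc, htbc, rfl⟩ : t.length ∈ T)
  omega

end RBCGS
/-- Fixed-point characterization of the resource-bounded Release modality
(correctness of the release-strategy search). -/
theorem release_fixed_point {Agt S Act Res P : Type} [Inhabited S]
    (M : RBCGS Agt S Act Res) (V : P → S → Prop)
    (A : Set Agt) (hA : A.Nonempty) (b : Agt → Res → ℕ) (s : S)
    (φ ψ : RBForm Agt Res P) :
    M.Sat V (.rls A b φ ψ) s ↔
      M.Sat V ψ s ∧
        (M.Sat V φ s ∨
          (∃ σA : Agt → Act, (∀ a ∈ A, σA a ∈ M.d s a) ∧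
            (¬ (∀ a ∈ A, ∀ ρ : Res, M.consR s (σA a) ρ ≤ b a ρ) ∨
              ¬ (M.outA A s σA).Nonempty)) ∨
          (∃ σA : Agt → Act, (∀ a ∈ A, σA a ∈ M.d s a) ∧
            (∀ a ∈ A, ∀ ρ : Res, M.consR s (σA a) ρ ≤ b a ρ) ∧
            (M.outA A s σA).Nonempty ∧
            ∀ s' ∈ M.outA A s σA,
              M.Sat V
                (.rls A (fun a ρ => b a ρ - M.consR s (σA a) ρ + M.prodR s (σA a) ρ) φ ψ)
                s')) := by
  classical
  have satrls : ∀ (b : Agt → Res → ℕ) (s : S), M.Sat V (.rls A b φ ψ) s ↔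
      ∃ F, M.Strategy A F ∧ ∀ l ∈ M.outSet A F b s,
        (∃ i < l.length, M.Sat V φ (l.getD i default) ∧
          ∀ j ≤ i, M.Sat V ψ (l.getD j default)) ∨
        (∀ j < l.length, M.Sat V ψ (l.getD j default)) := fun _ _ => Iff.rfl
  constructor
  · intro hsat
    rw [satrls] at hsat
    obtain ⟨F, hF, hout⟩ := hsat
    obtain ⟨l₀, hl₀⟩ := M.exists_bmaximal hA hF b s
    have hl₀ne : l₀ ≠ [] := hl₀.1.1
    have hl₀0 : l₀.getD 0 default = s := hl₀.1.2.1
    have hpsi : M.Sat V ψ s := by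
      rcases hout l₀ hl₀ with ⟨i, hi, hφ, hψ⟩ | hψ
      · exact hl₀0 ▸ hψ 0 (Nat.zero_le i)
      · exact hl₀0 ▸ hψ 0 (List.length_pos_iff.mpr hl₀ne)
    refine ⟨hpsi, ?_⟩
    by_cases hφs : M.Sat V φ s
    · exact Or.inl hφs
    have hjoint : ∀ a ∈ A, F [s] a ∈ M.d s a := by
      have h1 := hF [s] (by simp)
      simpa [RBCGS.JointAt] using h1
    by_cases hcase : M.BOK A F b s ∧ (M.outA A s (F [s])).Nonempty
    case neg =>
      refine Or.inr (Or.inl ⟨F [s], hjoint, ?_⟩)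
      rcases not_and_or.mp hcase with h1 | h1
      · exact Or.inl h1
      · exact Or.inr h1
    case pos =>
      obtain ⟨hbok, hne⟩ := hcase
      refine Or.inr (Or.inr ⟨F [s], hjoint, hbok, hne, fun s' hs' => ?_⟩)
      rw [satrls]
      refine ⟨RBCGS.shiftS F s, M.shiftS_strategy hF s, fun l' hl' => ?_⟩
      have hl'ne : l' ≠ [] := hl'.1.1
      have hl'0 : l'.getD 0 default = s' := hl'.1.2.1
      have hmem : (s :: l') ∈ M.outSet A F b s := by
        rw [RBCGS.outSet, Set.mem_setOf_eq, M.bmaximal_cons A F b s hl'ne hbok]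
        exact ⟨hl'0 ▸ hs', hl'0 ▸ hl'⟩
      rcases hout _ hmem with ⟨i, hi, hφ, hψ⟩ | hψ
      · cases i with
        | zero => exact absurd (by simpa using hφ) hφs
        | succ k =>
            refine Or.inl ⟨k, by simp at hi; omega, by simpa using hφ, fun j hj => ?_⟩
            have h2 := hψ (j+1) (by omega)
            simpa using h2
      · refine Or.inr fun j hj => ?_
        have h2 := hψ (j+1) (by simp; omega)
        simpa using h2
  · rintro ⟨hpsi, hcase⟩
    rw [satrls]
    rcases hcase with hφs | ⟨σA, hjoint, hbad⟩ | ⟨σA, hjoint, hbok, hne, hrec⟩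
    · refine ⟨M.choiceStrat, M.choiceStrat_strategy A, fun l hl => ?_⟩
      refine Or.inl ⟨0, List.length_pos_iff.mpr hl.1.1, hl.1.2.1.symm ▸ hφs, fun j hj => ?_⟩
      have hj0 : j = 0 := Nat.le_zero.mp hj
      subst hj0
      exact hl.1.2.1.symm ▸ hpsi
    · set F : List S → Agt → Act := fun l => if l = [s] then σA else M.choiceStrat l
        with hFdef
      have hFs : F [s] = σA := by simp [hFdef]
      have hFstrat : M.Strategy A F := by
        intro l hl a ha
        by_cases h1 : l = [s]
        · subst h1
          simpa [hFdef] using hjoint a ha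
        · simpa [hFdef, h1] using M.choiceStrat_strategy A l hl a ha
      refine ⟨F, hFstrat, fun l hl => ?_⟩
      obtain ⟨⟨hlne, hl0, hstep⟩, hbc, -⟩ := hl
      have hlen1 : l.length = 1 := by
        by_contra hlen
        have h2 : 2 ≤ l.length := by
          have := List.length_pos_iff.mpr hlne; omega
        have hs1 := hstep 0 (by omega)
        rw [hl0, RBCGS.take_one_ne_nil hlne, hl0, hFs] at hs1
        rcases hbad with hb | hb
        · push_neg at hb
          obtain ⟨a, ha, ρ, hρ⟩ := hb
          have h3 := hbc a ha 0 (by omega) ρ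
          rw [hl0, RBCGS.take_one_ne_nil hlne, hl0, hFs] at h3
          simp only [RBCGS.eAvail] at h3
          omega
        · exact hb ⟨_, hs1⟩
      refine Or.inr fun j hj => ?_
      have hj0 : j = 0 := by omega
      subst hj0
      exact hl0.symm ▸ hpsi
    · have hrec' : ∀ s' : S, ∃ F', M.Strategy A F' ∧ (s' ∈ M.outA A s σA →
          ∀ l ∈ M.outSet A F'
            (fun a ρ => b a ρ - M.consR s (σA a) ρ + M.prodR s (σA a) ρ) s',
            (∃ i < l.length, M.Sat V φ (l.getD i default) ∧
              ∀ j ≤ i, M.Sat V ψ (l.getD j default)) ∨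
            (∀ j < l.length, M.Sat V ψ (l.getD j default))) := by
        intro s'
        by_cases h1 : s' ∈ M.outA A s σA
        · obtain ⟨F', h2, h3⟩ := (satrls _ s').mp (hrec s' h1)
          exact ⟨F', h2, fun _ => h3⟩
        · exact ⟨M.choiceStrat, M.choiceStrat_strategy A, fun h => absurd h h1⟩
      choose F' hF'strat hF'prop using hrec'
      set F : List S → Agt → Act := fun l => match l with
        | [] => σA
        | [x] => if x = s then σA else M.choiceStrat [x]
        | _ :: y :: t => F' y (y :: t) with hFdef
      have hFs : F [s] = σA := by simp [hFdef]
      have hFcons : ∀ (x y : S) (t : List S), F (x :: y :: t) = F' y (y :: t) :=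
        fun _ _ _ => rfl
      have hFstrat : M.Strategy A F := by
        intro l hl a ha
        match l with
        | [] => exact absurd rfl hl
        | [x] =>
            by_cases hx : x = s
            · subst hx
              simpa [hFdef] using hjoint a ha
            · simpa [hFdef, hx] using M.choiceStrat_strategy A [x] (by simp) a ha
        | x :: y :: t =>
            have h1 := hF'strat y (y :: t) (by simp) a ha
            have h2 : (x :: y :: t).getD ((x :: y :: t).length - 1) default
                = (y :: t).getD ((y :: t).length - 1) default := by
              rw [show (x :: y :: t).length - 1 = ((y :: t).length - 1) + 1 by simp,
                List.getD_cons_succ]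
            rw [hFcons x y t, h2]
            exact h1
      have hbokF : M.BOK A F b s := by
        intro a ha ρ
        rw [hFs]
        exact hbok a ha ρ
      refine ⟨F, hFstrat, fun l hl => ?_⟩
      obtain ⟨⟨hlne, hl0, hstep⟩, hbc, hmax⟩ := hl
      have hlen2 : 2 ≤ l.length := by
        by_contra hlen
        have hlen1 : l.length = 1 := by
          have := List.length_pos_iff.mpr hlne; omega
        have hls : l = [s] := by
          cases l with
          | nil => exact absurd rfl hlne
          | cons x t =>
              cases t with
              | nil => rw [show x = s from by simpa using hl0]
              | cons y u => simp at hlen1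
        obtain ⟨s', hs'⟩ := hne
        refine hmax ⟨[s, s'], by rw [hls]; exact ⟨[s'], rfl⟩, by rw [hls]; simp, ?_, ?_⟩
        · refine ⟨by simp, by simp, fun i hi => ?_⟩
          have hi0 : i = 0 := by simp at hi; omega
          subst hi0
          simpa [hFs] using hs'
        · intro a ha i hi ρ
          have hi0 : i = 0 := by simp at hi; omega
          subst hi0
          simp only [List.getD_cons_zero, List.take_succ_cons, List.take_zero,
            RBCGS.eAvail, hFs]
          exact_mod_cast hbok a ha ρ
      obtain ⟨l', rfl⟩ : ∃ l', l = s :: l' := by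
        cases l with
        | nil => exact absurd rfl hlne
        | cons x t => exact ⟨t, by rw [show x = s from by simpa using hl0]⟩
      have hl'ne : l' ≠ [] := by
        intro h'; subst h'; simp at hlen2
      have hmem : M.BMaximal A F b s (s :: l') := ⟨⟨hlne, hl0, hstep⟩, hbc, hmax⟩
      rw [M.bmaximal_cons A F b s hl'ne hbokF] at hmem
      obtain ⟨hout', hmax'⟩ := hmem
      rw [hFs] at hout'
      have hcong : ∀ m : List S, m ≠ [] → m.getD 0 default = l'.getD 0 default →
          RBCGS.shiftS F s m = F' (l'.getD 0 default) m := by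
        intro m hm h0
        cases m with
        | nil => exact absurd rfl hm
        | cons y t =>
            have hy : y = l'.getD 0 default := by simpa using h0
            rw [← hy]
            exact hFcons s y t
      have hmem' : l' ∈ M.outSet A (F' (l'.getD 0 default)) (M.bnext F b s)
          (l'.getD 0 default) := by
        rw [← M.outSet_congr A (M.bnext F b s) (l'.getD 0 default) hcong]
        exact hmax'
      have hbb : M.bnext F b s =
          fun a ρ => b a ρ - M.consR s (σA a) ρ + M.prodR s (σA a) ρ := by
        funext a ρ
        simp [RBCGS.bnext, hFs]
      rw [hbb] at hmem'
      rcases hF'prop (l'.getD 0 default) hout' l' hmem' with ⟨i, hi, hφ, hψ⟩ | hψ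
      · refine Or.inl ⟨i+1, by simp; omega, by simpa using hφ, fun j hj => ?_⟩
        cases j with
        | zero => simpa using hpsi
        | succ k =>
            simp only [List.getD_cons_succ]
            exact hψ k (by omega)
      · refine Or.inr fun j hj => ?_
        cases j with
        | zero => simpa using hpsi
        | succ k =>
            simp only [List.getD_cons_succ]
            exact hψ k (by simp at hj; omega)
end

section
/- One-step characterization of the Next modality under imperfect information with strongly uniform strategies (correctness of the imperfect-information next search): Let M be an RB-CGS# with indistinguishability relations ∼_a respecting available actions, A a nonempty coalition, b a resource bound, s a state, and φ a formula. Then M, s ⊨_iR ⟨⟨A^b⟩⟩○φ if and only if there is a function assigning to every state s' with s' ∼_a s for some a ∈ A a joint action σ^{s'} ∈ D_A(s') such that: cons(s', (σ^{s'})_a) ≤ b_a componentwise for every a ∈ A; out(s', σ^{s'}) is nonempty; M, t ⊨_iR φ for every t ∈ out(s', σ^{s'}); and for every a ∈ A, (σ^{s'})_a = (σ^{s''})_a whenever s' ∼_a s''. -/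
namespace RBCGS

variable {Agt S Act Res P : Type} [Inhabited S]

/-- Componentwise lifting of the indistinguishability relation to equal-length state
sequences. -/
def ListSim (sim : Agt → S → S → Prop) (a : Agt) (l l' : List S) : Prop :=
  l.length = l'.length ∧ ∀ i < l.length, sim a (l.getD i default) (l'.getD i default)

/-- A strategy for coalition A is uniform: indistinguishable histories get the same
action for each agent of A. -/
def Uniform (A : Set Agt) (sim : Agt → S → S → Prop) (F : List S → Agt → Act) : Prop :=
  ∀ a ∈ A, ∀ l l' : List S, l ≠ [] → l' ≠ [] → ListSim sim a l l' → F l a = F l' a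

/-- Truth of an RB±ATL# formula under imperfect information and perfect recall with
strongly uniform strategies (`⊨_iR`). -/
def SatIR (M : RBCGS Agt S Act Res) (V : P → S → Prop) (sim : Agt → S → S → Prop) :
    RBForm Agt Res P → S → Prop
  | .prop p, s => V p s
  | .neg φ, s => ¬ SatIR M V sim φ s
  | .or φ ψ, s => SatIR M V sim φ s ∨ SatIR M V sim ψ s
  | .nxt A b φ, s => ∃ F, M.Strategy A F ∧ Uniform A sim F ∧
      ∀ s' : S, (∃ a ∈ A, sim a s' s) →
        ∀ l ∈ M.outSet A F b s', 2 ≤ l.length ∧ SatIR M V sim φ (l.getD 1 default)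
  | .untl A b φ ψ, s => ∃ F, M.Strategy A F ∧ Uniform A sim F ∧
      ∀ s' : S, (∃ a ∈ A, sim a s' s) →
        ∀ l ∈ M.outSet A F b s', ∃ i < l.length,
          SatIR M V sim ψ (l.getD i default) ∧ ∀ j < i, SatIR M V sim φ (l.getD j default)
  | .rls A b φ ψ, s => ∃ F, M.Strategy A F ∧ Uniform A sim F ∧
      ∀ s' : S, (∃ a ∈ A, sim a s' s) →
        ∀ l ∈ M.outSet A F b s',
          (∃ i < l.length, SatIR M V sim φ (l.getD i default) ∧
            ∀ j ≤ i, SatIR M V sim ψ (l.getD j default)) ∨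
          (∀ j < l.length, SatIR M V sim ψ (l.getD j default))

end RBCGS


namespace RBCGS

variable {Agt S Act Res P : Type} [Inhabited S]

lemma my_some_congr {α} {s t : Set α} (h : s = t) (hs : s.Nonempty) (ht : t.Nonempty) :
    hs.some = ht.some := by subst h; rfl

lemma my_take_last (l : List S) (i : ℕ) (h : i < l.length) :
    (l.take (i + 1)).getD ((l.take (i + 1)).length - 1) default = l.getD i default := by
  have hlen : (l.take (i + 1)).length = i + 1 := by simp; omega
  rw [hlen]
  simp [List.getD_eq_getElem?_getD, List.getElem?_take]

lemma my_strat_mem (M : RBCGS Agt S Act Res) {A : Set Agt} {F : List S → Agt → Act}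
    (hF : M.Strategy A F) {a : Agt} (ha : a ∈ A) (l : List S) (i : ℕ) (h : i < l.length) :
    F (l.take (i + 1)) a ∈ M.d (l.getD i default) a := by
  have hne : l.take (i + 1) ≠ [] := by
    apply List.ne_nil_of_length_pos
    rw [List.length_take]
    omega
  have := hF (l.take (i + 1)) hne a ha
  rwa [my_take_last l i h] at this

lemma my_consR_pos (M : RBCGS Agt S Act Res) {s : S} {a : Agt} {α : Act}
    (h : α ∈ M.d s a) : 1 ≤ M.consR s α M.res1 := by
  have := M.cost_first s a α h
  unfold consR
  omega

lemma my_prodR_zero (M : RBCGS Agt S Act Res) {s : S} {a : Agt} {α : Act}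
    (h : α ∈ M.d s a) : M.prodR s α M.res1 = 0 := by
  have := M.cost_first s a α h
  unfold prodR
  omega

lemma my_eAvail_le (M : RBCGS Agt S Act Res) {A : Set Agt} {F : List S → Agt → Act}
    (hF : M.Strategy A F) {a : Agt} (ha : a ∈ A) (b : Agt → Res → ℕ) (l : List S) :
    ∀ i ≤ l.length, M.eAvail F b l i a M.res1 ≤ (b a M.res1 : ℤ) - i := by
  intro i
  induction i with
  | zero => intro _; simp [eAvail]
  | succ i ih =>
    intro h
    have hmem := M.my_strat_mem hF ha l i (by omega)
    have h1 := M.my_consR_pos hmem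
    have h2 := M.my_prodR_zero hmem
    have h3 := ih (by omega)
    simp only [eAvail]
    push_cast
    omega

lemma my_length_le (M : RBCGS Agt S Act Res) {A : Set Agt} {F : List S → Agt → Act}
    (hF : M.Strategy A F) {a : Agt} (ha : a ∈ A) (b : Agt → Res → ℕ) (l : List S)
    (hb : M.BConsistent A F b l) : l.length ≤ b a M.res1 + 1 := by
  by_contra h
  push_neg at h
  set K := b a M.res1 with hK
  have h1 := hb a ha K (by omega) M.res1
  have h2 := M.my_eAvail_le hF ha b l K (by omega)
  have hmem := M.my_strat_mem hF ha l K (by omega)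
  have h3 := M.my_consR_pos hmem
  omega

lemma my_exists_maximal (M : RBCGS Agt S Act Res) {A : Set Agt} {F : List S → Agt → Act}
    (hF : M.Strategy A F) {a0 : Agt} (ha0 : a0 ∈ A) (b : Agt → Res → ℕ) (s : S) :
    ∀ (n : ℕ) (l : List S), M.ConsistentFrom A F s l → M.BConsistent A F b l →
      b a0 M.res1 + 2 ≤ l.length + n →
      ∃ l', l <+: l' ∧ M.BMaximal A F b s l' := by
  intro n
  induction n with
  | zero =>
    intro l _ hb hlen
    have := M.my_length_le hF ha0 b l hb
    omega
  | succ n ih =>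
    intro l hc hb hlen
    by_cases h : ∃ l', l <+: l' ∧ l.length < l'.length ∧
        M.ConsistentFrom A F s l' ∧ M.BConsistent A F b l'
    · obtain ⟨l'', h1, h2, h3, h4⟩ := h
      obtain ⟨l', h5, h6⟩ := ih l'' h3 h4 (by omega)
      exact ⟨l', h1.trans h5, h6⟩
    · exact ⟨l, List.prefix_refl l, hc, hb, h⟩

lemma my_outA_congr (M : RBCGS Agt S Act Res) (A : Set Agt) (s : S)
    {σ1 σ2 : Agt → Act} (h : ∀ a ∈ A, σ1 a = σ2 a) :
    M.outA A s σ1 = M.outA A s σ2 := by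
  unfold outA
  ext t
  constructor
  · rintro ⟨σf, h1, h2, h3⟩
    exact ⟨σf, h1, fun a ha => (h2 a ha).trans (h a ha), h3⟩
  · rintro ⟨σf, h1, h2, h3⟩
    exact ⟨σf, h1, fun a ha => (h2 a ha).trans (h a ha).symm, h3⟩

open Classical in
/-- The uniform strategy built from a one-step action assignment σ. -/
noncomputable def nextStrat (M : RBCGS Agt S Act Res) (A : Set Agt)
    (sim : Agt → S → S → Prop) (s : S) (σ : S → Agt → Act) : List S → Agt → Act :=
  fun l a =>
    if h : ∃ u, (∃ a' ∈ A, sim a' u s) ∧ sim a (l.getD (l.length - 1) default) u ∧ a ∈ A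
    then σ h.choose a
    else (M.d_ne (l.getD (l.length - 1) default) a).some

lemma nextStrat_val (M : RBCGS Agt S Act Res) {A : Set Agt} {sim : Agt → S → S → Prop}
    (hsim : ∀ a, Equivalence (sim a)) {s : S} {σ : S → Agt → Act}
    (hσu : ∀ a ∈ A, ∀ s' s'' : S, (∃ a' ∈ A, sim a' s' s) → (∃ a' ∈ A, sim a' s'' s) →
      sim a s' s'' → σ s' a = σ s'' a)
    {a : Agt} (ha : a ∈ A) (l : List S) {t : S}
    (ht : l.getD (l.length - 1) default = t) (hNt : ∃ a' ∈ A, sim a' t s) :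
    M.nextStrat A sim s σ l a = σ t a := by
  subst ht
  have hc : ∃ u, (∃ a' ∈ A, sim a' u s) ∧ sim a (l.getD (l.length - 1) default) u ∧ a ∈ A :=
    ⟨_, hNt, (hsim a).refl _, ha⟩
  simp only [nextStrat]
  rw [dif_pos hc]
  have spec := hc.choose_spec
  exact hσu a ha _ _ spec.1 hNt ((hsim a).symm spec.2.1)

lemma nextStrat_strategy (M : RBCGS Agt S Act Res) {A : Set Agt} {sim : Agt → S → S → Prop}
    (hsimd : ∀ a s s', sim a s s' → M.d s a = M.d s' a) {s : S} {σ : S → Agt → Act}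
    (hσ1 : ∀ s', (∃ a' ∈ A, sim a' s' s) → ∀ a ∈ A, σ s' a ∈ M.d s' a) :
    M.Strategy A (M.nextStrat A sim s σ) := by
  intro l _ a ha
  by_cases h : ∃ u, (∃ a' ∈ A, sim a' u s) ∧
      sim a (l.getD (l.length - 1) default) u ∧ a ∈ A
  · simp only [nextStrat]
    rw [dif_pos h]
    have spec := h.choose_spec
    rw [hsimd a (l.getD (l.length - 1) default) h.choose spec.2.1]
    exact hσ1 h.choose spec.1 a ha
  · simp only [nextStrat]
    rw [dif_neg h]
    exact (M.d_ne (l.getD (l.length - 1) default) a).some_mem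

lemma nextStrat_uniform (M : RBCGS Agt S Act Res) {A : Set Agt} {sim : Agt → S → S → Prop}
    (hsim : ∀ a, Equivalence (sim a))
    (hsimd : ∀ a s s', sim a s s' → M.d s a = M.d s' a) {s : S} {σ : S → Agt → Act}
    (hσu : ∀ a ∈ A, ∀ s' s'' : S, (∃ a' ∈ A, sim a' s' s) → (∃ a' ∈ A, sim a' s'' s) →
      sim a s' s'' → σ s' a = σ s'' a) :
    Uniform A sim (M.nextStrat A sim s σ) := by
  intro a ha l l' hl hl' hls
  obtain ⟨hlen, hsims⟩ := hls
  have hpos : 0 < l.length := List.length_pos_iff.mpr hl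
  have he : l.length - 1 = l'.length - 1 := by omega
  have htt' : sim a (l.getD (l.length - 1) default) (l'.getD (l'.length - 1) default) := by
    rw [← he]
    exact hsims (l.length - 1) (by omega)
  by_cases hc : ∃ u, (∃ a' ∈ A, sim a' u s) ∧ sim a (l.getD (l.length - 1) default) u ∧ a ∈ A
  · have hc' : ∃ u, (∃ a' ∈ A, sim a' u s) ∧
        sim a (l'.getD (l'.length - 1) default) u ∧ a ∈ A :=
      ⟨hc.choose, hc.choose_spec.1,
        (hsim a).trans ((hsim a).symm htt') hc.choose_spec.2.1, ha⟩
    simp only [nextStrat]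
    rw [dif_pos hc, dif_pos hc']
    exact hσu a ha _ _ hc.choose_spec.1 hc'.choose_spec.1
      ((hsim a).trans ((hsim a).symm hc.choose_spec.2.1)
        ((hsim a).trans htt' hc'.choose_spec.2.1))
  · have hc' : ¬ ∃ u, (∃ a' ∈ A, sim a' u s) ∧
        sim a (l'.getD (l'.length - 1) default) u ∧ a ∈ A := by
      rintro ⟨u, h1, h2, h3⟩
      exact hc ⟨u, h1, (hsim a).trans htt' h2, h3⟩
    simp only [nextStrat]
    rw [dif_neg hc, dif_neg hc']
    exact my_some_congr (hsimd a _ _ htt') _ _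

end RBCGS

/-- One-step characterization of the Next modality under imperfect
information with strongly uniform strategies: ⟨⟨A^b⟩⟩○φ holds at s iff one can assign to
each state s' indistinguishable from s (for some a ∈ A) an affordable joint action of A
available at s', with nonempty outcome set all of whose members satisfy φ, such that the
assignment is uniform (agents choose the same action at indistinguishable states). -/
theorem next_iR_characterization {Agt S Act Res P : Type} [Inhabited S]
    (M : RBCGS Agt S Act Res) (V : P → S → Prop)
    (sim : Agt → S → S → Prop) (hsim : ∀ a, Equivalence (sim a))
    (hsimd : ∀ a s s', sim a s s' → M.d s a = M.d s' a)
    (A : Set Agt) (hA : A.Nonempty) (b : Agt → Res → ℕ) (s : S)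
    (φ : RBForm Agt Res P) :
    M.SatIR V sim (.nxt A b φ) s ↔
      ∃ σ : S → Agt → Act,
        (∀ s' : S, (∃ a ∈ A, sim a s' s) →
          (∀ a ∈ A, σ s' a ∈ M.d s' a) ∧
          (∀ a ∈ A, ∀ ρ : Res, M.consR s' (σ s' a) ρ ≤ b a ρ) ∧
          (M.outA A s' (σ s')).Nonempty ∧
          ∀ t ∈ M.outA A s' (σ s'), M.SatIR V sim φ t) ∧
        (∀ a ∈ A, ∀ s' s'' : S, (∃ a' ∈ A, sim a' s' s) → (∃ a' ∈ A, sim a' s'' s) →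
          sim a s' s'' → σ s' a = σ s'' a) := by
    classical
  constructor
  · rintro ⟨F, hF, hU, hout⟩
    obtain ⟨a0, ha0⟩ := hA
    refine ⟨fun s' => F [s'], ?_, ?_⟩
    · intro s' hs'
      have hne : ([s'] : List S) ≠ [] := by simp
      have hcons1 : M.ConsistentFrom A F s' [s'] :=
        ⟨hne, by simp, by intro i hi; simp at hi⟩
      have hbcons1 : M.BConsistent A F b [s'] := by
        intro a _ i hi
        simp at hi
      have key_cons : ∀ a ∈ A, ∀ ρ, M.consR s' (F [s'] a) ρ ≤ b a ρ := by
        by_contra h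
        push_neg at h
        obtain ⟨a, ha, ρ, hρ⟩ := h
        have hmax : [s'] ∈ M.outSet A F b s' := by
          refine ⟨hcons1, hbcons1, ?_⟩
          rintro ⟨l', ⟨r, rfl⟩, hlen, hc', hb'⟩
          have h0 := hb' a ha 0 (by simp at hlen ⊢; omega) ρ
          simp [RBCGS.eAvail] at h0
          omega
        have := (hout s' hs' [s'] hmax).1
        simp at this
      have key_ne : (M.outA A s' (F [s'])).Nonempty := by
        by_contra hemp
        rw [Set.not_nonempty_iff_eq_empty] at hemp
        have hmax : [s'] ∈ M.outSet A F b s' := by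
          refine ⟨hcons1, hbcons1, ?_⟩
          rintro ⟨l', ⟨r, rfl⟩, hlen, hc', hb'⟩
          have h0 := hc'.2.2 0 (by simp at hlen ⊢; omega)
          simp [hemp] at h0
        have := (hout s' hs' [s'] hmax).1
        simp at this
      have key_sat : ∀ t ∈ M.outA A s' (F [s']), M.SatIR V sim φ t := by
        intro t ht
        have hcons2 : M.ConsistentFrom A F s' [s', t] := by
          refine ⟨by simp, by simp, ?_⟩
          intro i hi
          simp only [List.length_cons, List.length_nil] at hi
          have hi0 : i = 0 := by omega
          subst hi0
          simpa using ht
        have hbcons2 : M.BConsistent A F b [s', t] := by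
          intro a ha i hi ρ
          simp only [List.length_cons, List.length_nil] at hi
          have hi0 : i = 0 := by omega
          subst hi0
          simp only [RBCGS.eAvail]
          simp only [List.getD_cons_zero, List.take_succ_cons, List.take_zero]
          exact_mod_cast key_cons a ha ρ
        obtain ⟨l, ⟨r, rfl⟩, hmax⟩ :=
          M.my_exists_maximal hF ha0 b s' (b a0 M.res1) [s', t] hcons2 hbcons2 (by simp; omega)
        have hφ := (hout s' hs' _ hmax).2
        simpa using hφ
      exact ⟨fun a ha => by simpa using hF [s'] hne a ha, key_cons, key_ne, key_sat⟩
    · intro a ha s' s'' _ _ hss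
      refine hU a ha [s'] [s''] (by simp) (by simp) ⟨by simp, ?_⟩
      intro i hi
      simp at hi
      subst hi
      simpa using hss
  · rintro ⟨σ, hσ, hσu⟩
    refine ⟨M.nextStrat A sim s σ, M.nextStrat_strategy hsimd (fun s' h => (hσ s' h).1),
      M.nextStrat_uniform hsim hsimd hσu, ?_⟩
    intro s' hs' l hl
    obtain ⟨⟨hne, h0, hstep⟩, hbc, hnomax⟩ := hl
    obtain ⟨tl, rfl⟩ : ∃ tl, l = s' :: tl := by
      cases l with
      | nil => exact absurd rfl hne
      | cons hd tl => exact ⟨tl, by rw [show hd = s' by simpa using h0]⟩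
    have hFs' : ∀ a ∈ A, M.nextStrat A sim s σ [s'] a = σ s' a := fun a ha =>
      M.nextStrat_val hsim hσu ha [s'] (by simp) hs'
    have houtEq : M.outA A s' (M.nextStrat A sim s σ [s']) = M.outA A s' (σ s') :=
      M.my_outA_congr A s' hFs'
    have hlen2 : 2 ≤ (s' :: tl).length := by
      by_contra hlt
      have htl : tl = [] := by
        cases tl with
        | nil => rfl
        | cons x xs => simp at hlt
      subst htl
      obtain ⟨t, ht⟩ := (hσ s' hs').2.2.1
      apply hnomax
      refine ⟨[s', t], ⟨[t], rfl⟩, by simp, ⟨by simp, by simp, ?_⟩, ?_⟩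
      · intro i hi
        simp only [List.length_cons, List.length_nil] at hi
        have hi0 : i = 0 := by omega
        subst hi0
        simp only [List.getD_cons_succ, List.getD_cons_zero, List.take_succ_cons,
          List.take_zero]
        rw [houtEq]
        exact ht
      · intro a ha i hi ρ
        simp only [List.length_cons, List.length_nil] at hi
        have hi0 : i = 0 := by omega
        subst hi0
        simp only [RBCGS.eAvail]
        simp only [List.getD_cons_zero, List.take_succ_cons, List.take_zero]
        rw [hFs' a ha]
        exact_mod_cast (hσ s' hs').2.1 a ha ρ
    refine ⟨hlen2, ?_⟩
    have h1 := hstep 0 (by simp only [List.length_cons] at hlen2 ⊢; omega)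
    simp only [List.getD_cons_succ, List.getD_cons_zero, List.take_succ_cons,
      List.take_zero, Nat.zero_add] at h1 ⊢
    rw [houtEq] at h1
    exact (hσ s' hs').2.2.2 _ h1
end
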